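/- The central binomial coefficient satisfies √(2/π) · (2^n/√n) · (1 - 1/n) ≤ C(n, ⌊n/2⌋) ≤ √(2/π) · (2^n/√n) for all n ≥ 1. -/

import Mathlib

open scoped Topology
open Real Filter Nat

private lemma le_of_sq_le_sq' {x y : ℝ} (hx : 0 ≤ x) (hy : 0 ≤ y) (h : x ^ 2 ≤ y ^ 2) :
    x ≤ y := by nlinarith

private lemma cb_eq (m : ℕ) (hm : 1 ≤ m) :
    (Nat.centralBinom m : ℝ) * Real.sqrt m / 4 ^ m
      = Stirling.stirlingSeq (2 * m) / Stirling.stirlingSeq m ^ 2 := by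
  have hm0 : (0:ℝ) < m := by exact_mod_cast hm
  have hf1 : (0:ℝ) < (m ! : ℝ) := by exact_mod_cast m.factorial_pos
  have hf2 : (0:ℝ) < ((2*m) ! : ℝ) := by exact_mod_cast (2*m).factorial_pos
  have hsm : (0:ℝ) < Real.sqrt m := Real.sqrt_pos.2 hm0
  have he : (0:ℝ) < Real.exp 1 := Real.exp_pos 1
  have hcb : (Nat.centralBinom m : ℝ) = ((2*m)! : ℝ) / ((m ! : ℝ) * (m ! : ℝ)) := by
    rw [eq_div_iff (by positivity), Nat.centralBinom]
    have := Nat.choose_mul_factorial_mul_factorial (show m ≤ 2*m by omega)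
    rw [show 2*m - m = m by omega] at this
    rw [← mul_assoc]
    exact_mod_cast congrArg (Nat.cast (R := ℝ)) this
  have hs4 : Real.sqrt (2 * ((2*m : ℕ) : ℝ)) = 2 * Real.sqrt m := by
    push_cast
    rw [show (2:ℝ) * (2 * m) = 4 * m by ring, Real.sqrt_mul (by norm_num),
      show (4:ℝ) = 2^2 by norm_num, Real.sqrt_sq (by norm_num)]
  have hs2 : Real.sqrt (2 * (m : ℝ)) = Real.sqrt 2 * Real.sqrt m :=
    Real.sqrt_mul (by norm_num) _
  have hpow : (((2*m : ℕ) : ℝ) / Real.exp 1) ^ (2*m) = 4 ^ m * (((m:ℝ) / Real.exp 1) ^ m) ^ 2 := by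
    have e1 : (2:ℝ)^(2*m) = 4^m := by rw [pow_mul]; norm_num
    have e2 : ((m:ℝ)/Real.exp 1)^(2*m) = (((m:ℝ)/Real.exp 1)^m)^2 := by
      rw [← pow_mul, mul_comm]
    push_cast
    rw [show (2:ℝ) * m / Real.exp 1 = 2 * ((m:ℝ)/Real.exp 1) by ring, mul_pow, e1, e2]
  rw [Stirling.stirlingSeq, Stirling.stirlingSeq, hcb, hs4, hpow, hs2]
  have hpp : (0:ℝ) < ((m:ℝ)/Real.exp 1) ^ m := by positivity
  have hs2' : (0:ℝ) < Real.sqrt 2 := by positivity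
  field_simp
  ring_nf
  rw [Real.sq_sqrt (by norm_num : (0:ℝ) ≤ 2)]

private lemma u_tendsto :
    Tendsto (fun m : ℕ => (Nat.centralBinom m : ℝ) * Real.sqrt m / 4 ^ m) atTop
      (𝓝 (1 / Real.sqrt π)) := by
  have h2 : Tendsto (fun m : ℕ => Stirling.stirlingSeq (2 * m)) atTop (𝓝 (Real.sqrt π)) :=
    Stirling.tendsto_stirlingSeq_sqrt_pi.comp (tendsto_id.const_mul_atTop' two_pos)
  have hπ : (0:ℝ) < Real.sqrt π := Real.sqrt_pos.2 pi_pos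
  have h := h2.div (Stirling.tendsto_stirlingSeq_sqrt_pi.pow 2) (by positivity)
  have heq : Real.sqrt π / Real.sqrt π ^ 2 = 1 / Real.sqrt π := by
    rw [sq, div_mul_eq_div_div, div_self hπ.ne']
  rw [heq] at h
  refine Tendsto.congr' ?_ h
  filter_upwards [eventually_ge_atTop 1] with m hm
  exact (cb_eq m hm).symm

private lemma u_mono :
    Monotone (fun m : ℕ => (Nat.centralBinom m : ℝ) * Real.sqrt m / 4 ^ m) := by
  apply monotone_nat_of_le_succ
  intro m
  have hrec : ((m:ℝ) + 1) * (Nat.centralBinom (m+1) : ℝ)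
      = 2 * (2 * m + 1) * (Nat.centralBinom m : ℝ) := by
    have := Nat.succ_mul_centralBinom_succ m
    exact_mod_cast congrArg (Nat.cast (R := ℝ)) this
  have hcb : (0:ℝ) < (Nat.centralBinom m : ℝ) := by exact_mod_cast Nat.centralBinom_pos m
  have hA : 2 * ((m:ℝ) + 1) * Real.sqrt m ≤ (2 * m + 1) * Real.sqrt ((m:ℝ) + 1) := by
    apply le_of_sq_le_sq' (by positivity) (by positivity)
    have h1 : Real.sqrt (m:ℝ) ^ 2 = m := Real.sq_sqrt m.cast_nonneg
    have h2 : Real.sqrt ((m:ℝ) + 1) ^ 2 = (m:ℝ) + 1 := Real.sq_sqrt (by positivity)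
    simp only [mul_pow]
    rw [h1, h2]
    nlinarith [(m.cast_nonneg : (0:ℝ) ≤ m)]
  rw [div_le_div_iff₀ (by positivity) (by positivity)]
  apply le_of_mul_le_mul_left _ (show (0:ℝ) < (m:ℝ) + 1 by positivity)
  push_cast
  calc ((m:ℝ)+1) * ((Nat.centralBinom m : ℝ) * Real.sqrt m * 4 ^ (m+1))
      = 2 * ((Nat.centralBinom m : ℝ) * 4 ^ m) * (2 * ((m:ℝ) + 1) * Real.sqrt m) := by ring
    _ ≤ 2 * ((Nat.centralBinom m : ℝ) * 4 ^ m) * ((2 * m + 1) * Real.sqrt ((m:ℝ) + 1)) :=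
        mul_le_mul_of_nonneg_left hA (by positivity)
    _ = (((m:ℝ) + 1) * (Nat.centralBinom (m+1) : ℝ)) * (Real.sqrt ((m:ℝ)+1) * 4 ^ m) := by
        rw [hrec]; ring
    _ = ((m:ℝ)+1) * ((Nat.centralBinom (m+1) : ℝ) * Real.sqrt ((m:ℝ)+1) * 4 ^ m) := by ring

private lemma w_anti :
    Antitone (fun m : ℕ => (Nat.centralBinom m : ℝ) * Real.sqrt (2 * m + 1) / 4 ^ m) := by
  apply antitone_nat_of_succ_le
  intro m
  have hrec : ((m:ℝ) + 1) * (Nat.centralBinom (m+1) : ℝ)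
      = 2 * (2 * m + 1) * (Nat.centralBinom m : ℝ) := by
    have := Nat.succ_mul_centralBinom_succ m
    exact_mod_cast congrArg (Nat.cast (R := ℝ)) this
  have hcb : (0:ℝ) < (Nat.centralBinom m : ℝ) := by exact_mod_cast Nat.centralBinom_pos m
  have hA : (2 * (m:ℝ) + 1) * Real.sqrt (2 * (m:ℝ) + 3)
      ≤ 2 * ((m:ℝ) + 1) * Real.sqrt (2 * (m:ℝ) + 1) := by
    apply le_of_sq_le_sq' (by positivity) (by positivity)
    have h1 : Real.sqrt (2*(m:ℝ)+3) ^ 2 = 2*(m:ℝ)+3 := Real.sq_sqrt (by positivity)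
    have h2 : Real.sqrt (2*(m:ℝ)+1) ^ 2 = 2*(m:ℝ)+1 := Real.sq_sqrt (by positivity)
    simp only [mul_pow]
    rw [h1, h2]
    nlinarith [(m.cast_nonneg : (0:ℝ) ≤ m)]
  rw [div_le_div_iff₀ (by positivity) (by positivity)]
  apply le_of_mul_le_mul_left _ (show (0:ℝ) < (m:ℝ) + 1 by positivity)
  push_cast
  calc ((m:ℝ)+1) * ((Nat.centralBinom (m+1) : ℝ) * Real.sqrt (2*((m:ℝ)+1) + 1) * 4 ^ m)
      = (((m:ℝ)+1) * (Nat.centralBinom (m+1) : ℝ)) * (Real.sqrt (2*(m:ℝ)+3) * 4 ^ m) := by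
        rw [show 2*((m:ℝ)+1) + 1 = 2*(m:ℝ)+3 by ring]; ring
    _ = (2 * ((Nat.centralBinom m : ℝ) * 4 ^ m)) * ((2 * (m:ℝ) + 1) * Real.sqrt (2*(m:ℝ)+3)) := by
        rw [hrec]; ring
    _ ≤ (2 * ((Nat.centralBinom m : ℝ) * 4 ^ m)) * (2 * ((m:ℝ) + 1) * Real.sqrt (2*(m:ℝ)+1)) :=
        mul_le_mul_of_nonneg_left hA (by positivity)
    _ = ((m:ℝ)+1) * ((Nat.centralBinom m : ℝ) * Real.sqrt (2*(m:ℝ)+1) * 4 ^ (m+1)) := by ring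

private lemma w_tendsto :
    Tendsto (fun m : ℕ => (Nat.centralBinom m : ℝ) * Real.sqrt (2 * m + 1) / 4 ^ m) atTop
      (𝓝 (Real.sqrt 2 / Real.sqrt π)) := by
  have h2 : Tendsto (fun m : ℕ => Real.sqrt ((2 * (m:ℝ) + 1) / m)) atTop (𝓝 (Real.sqrt 2)) := by
    have hin : Tendsto (fun m : ℕ => (2 * (m:ℝ) + 1) / m) atTop (𝓝 2) := by
      have h := (tendsto_const_nhds (x := (2:ℝ)) (f := atTop)).add
        tendsto_one_div_atTop_nhds_zero_nat
      rw [add_zero] at h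
      refine h.congr' ?_
      filter_upwards [eventually_ge_atTop 1] with m hm
      have : ((m:ℝ)) ≠ 0 := by positivity
      field_simp
    exact (Real.continuous_sqrt.tendsto 2).comp hin
  have h := u_tendsto.mul h2
  have heq : 1 / Real.sqrt π * Real.sqrt 2 = Real.sqrt 2 / Real.sqrt π := by ring
  rw [heq] at h
  refine Tendsto.congr' ?_ h
  filter_upwards [eventually_ge_atTop 1] with m hm
  have hm0 : (0:ℝ) < m := by exact_mod_cast hm
  have hs : Real.sqrt ((2 * (m:ℝ) + 1) / m) = Real.sqrt (2 * (m:ℝ) + 1) / Real.sqrt m :=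
    Real.sqrt_div (by positivity) _
  have hne : Real.sqrt (m:ℝ) ≠ 0 := by positivity
  simp only [hs]
  field_simp

private lemma cb_upper (m : ℕ) :
    (Nat.centralBinom m : ℝ) * Real.sqrt m / 4 ^ m ≤ 1 / Real.sqrt π :=
  u_mono.ge_of_tendsto u_tendsto m

private lemma cb_lower (m : ℕ) :
    Real.sqrt 2 / Real.sqrt π ≤ (Nat.centralBinom m : ℝ) * Real.sqrt (2 * m + 1) / 4 ^ m :=
  w_anti.le_of_tendsto w_tendsto m

set_option maxHeartbeats 1000000 in
/-- Stirling-type bounds for the central binomial coefficient: for all `n ≥ 1`,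
`√(2/π) · (2^n/√n) · (1 - 1/n) ≤ C(n, ⌊n/2⌋) ≤ √(2/π) · (2^n/√n)`. -/
theorem stmt_12 (n : ℕ) (hn : 1 ≤ n) :
    Real.sqrt (2 / Real.pi) * ((2 : ℝ) ^ n / Real.sqrt n) * (1 - 1 / (n : ℝ)) ≤
        ((n.choose (n / 2) : ℕ) : ℝ) ∧
      ((n.choose (n / 2) : ℕ) : ℝ) ≤ Real.sqrt (2 / Real.pi) * ((2 : ℝ) ^ n / Real.sqrt n) := by
  have hπ : (0:ℝ) < Real.sqrt π := Real.sqrt_pos.2 pi_pos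
  have h2s : (0:ℝ) < Real.sqrt 2 := by positivity
  have hsqrt2pi : Real.sqrt (2/π) = Real.sqrt 2 / Real.sqrt π := Real.sqrt_div (by norm_num) π
  obtain ⟨m, rfl | rfl⟩ := Nat.even_or_odd' n
  · -- n = 2 * m
    have hm : 1 ≤ m := by omega
    have hm0 : (0:ℝ) < m := by exact_mod_cast hm
    have hmr : (1:ℝ) ≤ m := by exact_mod_cast hm
    have hsm : (0:ℝ) < Real.sqrt m := Real.sqrt_pos.2 hm0
    have hsm1 : (0:ℝ) < Real.sqrt (2*(m:ℝ)+1) := Real.sqrt_pos.2 (by positivity)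
    have hdiv : 2*m/2 = m := by omega
    rw [hdiv]
    have hc : (((2*m).choose m : ℕ) : ℝ) = (Nat.centralBinom m : ℝ) := rfl
    have hup : (Nat.centralBinom m : ℝ) ≤ 4^m/(Real.sqrt π * Real.sqrt m) := by
      have h := cb_upper m
      rw [div_le_div_iff₀ (by positivity) (by positivity)] at h
      rw [le_div_iff₀ (by positivity)]
      nlinarith [h]
    have hlo : Real.sqrt 2 * 4^m/(Real.sqrt π * Real.sqrt (2*(m:ℝ)+1))
        ≤ (Nat.centralBinom m : ℝ) := by
      have h := cb_lower m
      rw [div_le_div_iff₀ (by positivity) (by positivity)] at h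
      rw [div_le_iff₀ (by positivity)]
      nlinarith [h]
    have hre : Real.sqrt (2/π) * ((2:ℝ)^(2*m)/Real.sqrt ((2*m : ℕ):ℝ))
        = 4^m/(Real.sqrt π * Real.sqrt m) := by
      rw [hsqrt2pi]
      push_cast
      rw [Real.sqrt_mul (by norm_num : (0:ℝ) ≤ 2) m,
        show (2:ℝ)^(2*m) = 4^m by rw [pow_mul]; norm_num]
      field_simp
    constructor
    · rw [hc, hre]
      refine le_trans ?_ hlo
      push_cast
      have hnn : (0:ℝ) ≤ 1 - 1/(2*(m:ℝ)) := by
        rw [sub_nonneg, div_le_one (by positivity)]; linarith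
      have hkey : (1 - 1/(2*(m:ℝ))) * Real.sqrt (2*(m:ℝ)+1) ≤ Real.sqrt 2 * Real.sqrt m := by
        apply le_of_sq_le_sq' (mul_nonneg hnn (Real.sqrt_nonneg _)) (by positivity)
        simp only [mul_pow]
        rw [Real.sq_sqrt (by positivity : (0:ℝ) ≤ 2*(m:ℝ)+1),
          Real.sq_sqrt (by norm_num : (0:ℝ) ≤ 2), Real.sq_sqrt m.cast_nonneg]
        have e : (1 - 1/(2*(m:ℝ))) = (2*(m:ℝ)-1)/(2*(m:ℝ)) := by field_simp
        rw [e, div_pow, div_mul_eq_mul_div, div_le_iff₀ (by positivity)]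
        nlinarith [hmr]
      rw [div_mul_eq_mul_div, div_le_div_iff₀ (by positivity) (by positivity)]
      nlinarith [mul_le_mul_of_nonneg_left hkey
        (show (0:ℝ) ≤ 4^m * Real.sqrt π by positivity)]
    · rw [hc, hre]
      exact hup
  · -- n = 2 * m + 1
    have hdiv : (2*m+1)/2 = m := by omega
    rw [hdiv]
    have hodd : ((m:ℝ)+1) * (((2*m+1).choose m : ℕ) : ℝ)
        = (2*(m:ℝ)+1) * (Nat.centralBinom m : ℝ) := by
      have h1 := Nat.add_one_mul_choose_eq (2*m) m
      rw [Nat.choose_symm_half] at h1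
      have h2 := congrArg (Nat.cast (R := ℝ)) h1
      push_cast at h2
      rw [Nat.centralBinom]
      push_cast
      linarith [h2]
    rcases Nat.eq_zero_or_pos m with rfl | hm
    · -- n = 1
      norm_num
      rw [div_mul_eq_mul_div, one_le_div hπ]
      apply le_of_sq_le_sq' hπ.le (by positivity)
      rw [mul_pow, Real.sq_sqrt (by norm_num : (0:ℝ) ≤ 2), Real.sq_sqrt pi_pos.le]
      nlinarith [pi_le_four]
    · have hm0 : (0:ℝ) < m := by exact_mod_cast hm
      have hmr : (1:ℝ) ≤ m := by exact_mod_cast hm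
      have hsm : (0:ℝ) < Real.sqrt m := Real.sqrt_pos.2 hm0
      have hsm1 : (0:ℝ) < Real.sqrt (2*(m:ℝ)+1) := Real.sqrt_pos.2 (by positivity)
      have hcbpos : (0:ℝ) < (Nat.centralBinom m : ℝ) := by
        exact_mod_cast Nat.centralBinom_pos m
      have hup : (Nat.centralBinom m : ℝ) ≤ 4^m/(Real.sqrt π * Real.sqrt m) := by
        have h := cb_upper m
        rw [div_le_div_iff₀ (by positivity) (by positivity)] at h
        rw [le_div_iff₀ (by positivity)]
        nlinarith [h]
      have hlo : Real.sqrt 2 * 4^m/(Real.sqrt π * Real.sqrt (2*(m:ℝ)+1))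
          ≤ (Nat.centralBinom m : ℝ) := by
        have h := cb_lower m
        rw [div_le_div_iff₀ (by positivity) (by positivity)] at h
        rw [div_le_iff₀ (by positivity)]
        nlinarith [h]
      have hC : (((2*m+1).choose m : ℕ) : ℝ)
          = (2*(m:ℝ)+1) * (Nat.centralBinom m : ℝ) / ((m:ℝ)+1) := by
        rw [eq_div_iff (by positivity)]
        linarith [hodd]
      have hpow2 : (2:ℝ)^(2*m+1) = 2 * 4^m := by
        rw [pow_succ, pow_mul]; norm_num; ring
      constructor
      · -- lower bound, odd case
        rw [hC, hsqrt2pi]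
        push_cast
        rw [hpow2]
        have step1 : (2*(m:ℝ)+1) * (Real.sqrt 2 * 4^m/(Real.sqrt π * Real.sqrt (2*(m:ℝ)+1)))
            / ((m:ℝ)+1) ≤ (2*(m:ℝ)+1) * (Nat.centralBinom m : ℝ) / ((m:ℝ)+1) := by
          gcongr
        refine le_trans ?_ step1
        have hratio : 4*(m:ℝ)/(2*(m:ℝ)+1) ≤ (2*(m:ℝ)+1)/((m:ℝ)+1) := by
          rw [div_le_div_iff₀ (by positivity) (by positivity)]
          nlinarith
        have hT : (0:ℝ) ≤ Real.sqrt 2 * 4^m/(Real.sqrt π * Real.sqrt (2*(m:ℝ)+1)) := by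
          positivity
        calc Real.sqrt 2 / Real.sqrt π * (2 * 4^m / Real.sqrt (2*(m:ℝ)+1)) * (1 - 1/(2*(m:ℝ)+1))
            = (Real.sqrt 2 * 4^m/(Real.sqrt π * Real.sqrt (2*(m:ℝ)+1))) * (4*(m:ℝ)/(2*(m:ℝ)+1)) := by
              rw [show (1:ℝ) - 1/(2*(m:ℝ)+1) = 2*(m:ℝ)/(2*(m:ℝ)+1) by field_simp; ring]
              field_simp
              ring
          _ ≤ (Real.sqrt 2 * 4^m/(Real.sqrt π * Real.sqrt (2*(m:ℝ)+1))) * ((2*(m:ℝ)+1)/((m:ℝ)+1)) := by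
              exact mul_le_mul_of_nonneg_left hratio hT
          _ = (2*(m:ℝ)+1) * (Real.sqrt 2 * 4^m/(Real.sqrt π * Real.sqrt (2*(m:ℝ)+1)))
              / ((m:ℝ)+1) := by ring
      · -- upper bound, odd case
        rw [hC, hsqrt2pi]
        push_cast
        rw [hpow2]
        have hkey : (2*(m:ℝ)+1) * Real.sqrt (2*(m:ℝ)+1)
            ≤ 2 * Real.sqrt 2 * ((m:ℝ)+1) * Real.sqrt m := by
          apply le_of_sq_le_sq' (by positivity) (by positivity)
          simp only [mul_pow]
          rw [Real.sq_sqrt (by positivity : (0:ℝ) ≤ 2*(m:ℝ)+1),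
            Real.sq_sqrt (by norm_num : (0:ℝ) ≤ 2), Real.sq_sqrt m.cast_nonneg]
          nlinarith [hmr]
        have step1 : (2*(m:ℝ)+1) * (Nat.centralBinom m : ℝ) / ((m:ℝ)+1)
            ≤ (2*(m:ℝ)+1) * (4^m/(Real.sqrt π * Real.sqrt m)) / ((m:ℝ)+1) := by
          gcongr
        refine le_trans step1 ?_
        have e1 : (2*(m:ℝ)+1) * (4^m/(Real.sqrt π*Real.sqrt m)) / ((m:ℝ)+1)
            = ((2*(m:ℝ)+1)*4^m) / (Real.sqrt π*Real.sqrt m*((m:ℝ)+1)) := by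
          field_simp
        have e2 : Real.sqrt 2/Real.sqrt π * (2*4^m/Real.sqrt (2*(m:ℝ)+1))
            = (Real.sqrt 2*2*4^m)/(Real.sqrt π*Real.sqrt (2*(m:ℝ)+1)) := by
          field_simp
        rw [e1, e2, div_le_div_iff₀ (by positivity) (by positivity)]
        nlinarith [mul_le_mul_of_nonneg_left hkey
          (show (0:ℝ) ≤ 4^m * Real.sqrt π by positivity)]
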